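/- (Lifted decoding bound.) Suppose k ≤ p^{mt} − p^{m(t−1)}. Then for every polynomial f over F of degree at most k−1, if the word (Tr(f(α)/α))_{α∈F∖{0}} is not identically zero, then it has at least ⌊(p^{mt} − k)/p^{m(t−1)}⌋ nonzero coordinates. Consequently, the minimum distance of the repair-trace code T(A,k) is at least ⌊(p^{mt} − k)/p^{m(t−1)}⌋. -/

import Mathlib

/-- Sum of `α ^ e` over a finite field vanishes when `e > 0` and `card - 1 ∤ e`. -/
lemma aux_sum_pow (F : Type) [Field F] [Fintype F] (e : ℕ) (he : 0 < e)
    (hnd : ¬ (Fintype.card F - 1 ∣ e)) : ∑ α : F, α ^ e = 0 := by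
  classical
  have h1 : ∑ x : Fˣ, ((x : F)) ^ e = 0 := by
    have h := FiniteField.sum_pow_units F e
    rw [if_neg hnd] at h
    simpa using h
  have hmap : (Finset.univ : Finset Fˣ).map ⟨Units.val, Units.val_injective⟩
      = (Finset.univ : Finset F).erase 0 := by
    ext x
    simp only [Finset.mem_map, Finset.mem_univ, true_and, Finset.mem_erase,
      Function.Embedding.coeFn_mk, and_true]
    constructor
    · rintro ⟨u, rfl⟩; exact u.ne_zero
    · intro hx; exact ⟨Units.mk0 x hx, rfl⟩
  have h2 := Finset.sum_erase_add Finset.univ (fun α : F => α ^ e) (Finset.mem_univ (0 : F))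
  simp only [zero_pow he.ne', add_zero] at h2
  rw [← h2, ← hmap, Finset.sum_map]
  simpa using h1

/-- Lifted decoding bound: if `k ≤ p^{mt} − p^{m(t−1)}`, every
not-identically-zero repair-trace word `(Tr(f(α)/α))_{α ≠ 0}` has at least
`⌊(p^{mt} − k)/p^{m(t−1)}⌋` nonzero coordinates; hence the minimum distance of
`T(A,k)` is at least `⌊(p^{mt} − k)/p^{m(t−1)}⌋`. -/
theorem stmt_3 (p m t k : ℕ) (hp : p.Prime) (hm : 1 ≤ m) (ht : 1 ≤ t) (hk : 1 ≤ k)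
    (hkbd : k ≤ p ^ (m * t) - p ^ (m * (t - 1)))
    (B F : Type) [Field B] [Field F] [Fintype B] [Fintype F] [Algebra B F]
    (hcardB : Fintype.card B = p ^ m) (hcardF : Fintype.card F = p ^ (m * t))
    (Tr : F → B)
    (hTr : ∀ x : F, algebraMap B F (Tr x) = ∑ i ∈ Finset.range t, x ^ p ^ (m * i))
    (f : Polynomial F)
    (hf : f.degree ≤ ((k - 1 : ℕ) : WithBot ℕ))
    (hnz : ∃ α : F, α ≠ 0 ∧ Tr (f.eval α / α) ≠ 0) :
    (p ^ (m * t) - k) / p ^ (m * (t - 1))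
      ≤ {α : F | α ≠ 0 ∧ Tr (f.eval α / α) ≠ 0}.ncard := by
  classical
  haveI : Fact p.Prime := ⟨hp⟩
  set q : ℕ := p ^ (m * t) with hq
  set Q : ℕ := p ^ (m * (t - 1)) with hQ
  have hp2 : 2 ≤ p := hp.two_le
  have hmt : 0 < m * t := Nat.mul_pos hm ht
  have hQpos : 0 < Q := by positivity
  have hq2 : 2 ≤ q := le_trans hp2 (Nat.le_self_pow hmt.ne' p)
  have hkq : k ≤ q := le_trans hkbd (Nat.sub_le _ _)
  -- characteristic of F is p
  haveI : CharP F (ringChar F) := ringChar.charP F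
  have hchar : CharP F p := by
    obtain ⟨n, hrp, hcard'⟩ := FiniteField.card F (ringChar F)
    have hr : ringChar F = p := by
      have hdvd : ringChar F ∣ q := by
        rw [← hcardF, hcard']
        exact dvd_pow_self _ (by exact_mod_cast n.ne_zero)
      rw [hq] at hdvd
      exact (Nat.prime_dvd_prime_iff_eq hrp hp).mp (hrp.dvd_of_dvd_pow hdvd)
    exact hr ▸ ringChar.charP F
  haveI := hchar
  haveI : ExpChar F p := ExpChar.prime hp
  set D : ℕ := (q - k) / Q with hDdef
  have hDQ : D * Q ≤ q - k := Nat.div_mul_le_self _ _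
  -- key divisibility fact
  have hndvd : ∀ i, i < t → ∀ d, d < k → ∀ s, 2 ≤ s → s ≤ D →
      ¬ (q - 1 ∣ d * p ^ (m * i) + (s * Q - p ^ (m * i))) := by
    intro i hi d hd s hs2 hsD hcon
    have hNQ : p ^ (m * i) ≤ Q := by
      rw [hQ]
      exact Nat.pow_le_pow_right (by omega) (Nat.mul_le_mul_left m (by omega))
    have hsQ : 2 * Q ≤ s * Q := Nat.mul_le_mul_right Q hs2
    have hNsQ : p ^ (m * i) ≤ s * Q := le_trans hNQ (le_trans (by omega : Q ≤ 2 * Q) hsQ)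
    have h1 : ((q : ℤ) - 1) ∣ ((d : ℤ) * (p : ℤ) ^ (m * i) + ((s : ℤ) * (Q : ℤ) - (p : ℤ) ^ (m * i))) := by
      have h0 := Int.natCast_dvd_natCast.mpr hcon
      rw [Nat.cast_add, Nat.cast_sub hNsQ, Nat.cast_sub (by omega : 1 ≤ q)] at h0
      push_cast at h0
      exact h0
    have hNP : (p : ℤ) ^ (m * i) * (p : ℤ) ^ (m * (t - i)) = (q : ℤ) := by
      rw [← pow_add, hq]
      push_cast
      congr 1
      have h5 : i + (t - i) = t := by omega
      calc m * i + m * (t - i) = m * (i + (t - i)) := by ring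
        _ = m * t := by rw [h5]
    have hQP : (Q : ℤ) * (p : ℤ) ^ (m * (t - i)) = (q : ℤ) * (p : ℤ) ^ (m * (t - 1 - i)) := by
      rw [hQ, hq]
      push_cast
      rw [← pow_add, ← pow_add]
      congr 1
      have h5 : (t - 1) + (t - i) = t + (t - 1 - i) := by omega
      calc m * (t - 1) + m * (t - i) = m * ((t - 1) + (t - i)) := by ring
        _ = m * (t + (t - 1 - i)) := by rw [h5]
        _ = m * t + m * (t - 1 - i) := by ring
    set M : ℤ := (d : ℤ) + (s : ℤ) * (p : ℤ) ^ (m * (t - 1 - i)) - 1 with hM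
    have h2 : ((d : ℤ) * (p : ℤ) ^ (m * i) + ((s : ℤ) * (Q : ℤ) - (p : ℤ) ^ (m * i)))
        * (p : ℤ) ^ (m * (t - i)) = (q : ℤ) * M := by
      rw [hM]
      linear_combination ((d : ℤ) - 1) * hNP + (s : ℤ) * hQP
    have h3 : ((q : ℤ) - 1) ∣ (q : ℤ) * M := h2 ▸ h1.mul_right _
    have h4 : ((q : ℤ) - 1) ∣ M := by
      have h5 : ((q : ℤ) - 1) ∣ ((q : ℤ) * M - ((q : ℤ) - 1) * M) := dvd_sub h3 (dvd_mul_right _ _)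
      have h6 : (q : ℤ) * M - ((q : ℤ) - 1) * M = M := by ring
      rwa [h6] at h5
    have hppow1 : (1 : ℤ) ≤ (p : ℤ) ^ (m * (t - 1 - i)) := one_le_pow₀ (by exact_mod_cast hp.one_lt.le)
    have hMpos : 1 ≤ M := by
      rw [hM]
      have : (2 : ℤ) ≤ (s : ℤ) * (p : ℤ) ^ (m * (t - 1 - i)) := by
        calc (2 : ℤ) = 2 * 1 := by ring
          _ ≤ (s : ℤ) * (p : ℤ) ^ (m * (t - 1 - i)) :=
            mul_le_mul (by exact_mod_cast hs2) hppow1 one_pos.le (by positivity)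
      have hd0 : (0 : ℤ) ≤ (d : ℤ) := Int.natCast_nonneg d
      linarith
    have hMle : M ≤ (q : ℤ) - 2 := by
      have hpow : (p : ℤ) ^ (m * (t - 1 - i)) ≤ (Q : ℤ) := by
        rw [hQ]
        push_cast
        exact pow_le_pow_right₀ (by exact_mod_cast hp.one_lt.le) (Nat.mul_le_mul_left m (by omega))
      have h6 : (s : ℤ) * (p : ℤ) ^ (m * (t - 1 - i)) ≤ (D : ℤ) * (Q : ℤ) := by
        apply mul_le_mul (by exact_mod_cast hsD) hpow (by positivity) (Int.natCast_nonneg D)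
      have h7 : (D : ℤ) * (Q : ℤ) ≤ (q : ℤ) - (k : ℤ) := by
        have h7' : ((D * Q : ℕ) : ℤ) ≤ ((q - k : ℕ) : ℤ) := by exact_mod_cast hDQ
        rw [Nat.cast_sub hkq] at h7'
        push_cast at h7'
        linarith
      have hd' : (d : ℤ) ≤ (k : ℤ) - 1 := by
        have : d < k := hd
        omega
      rw [hM]
      linarith
    have := Int.le_of_dvd (by linarith) h4
    have hq2' : (2 : ℤ) ≤ (q : ℤ) := by exact_mod_cast hq2
    linarith
  -- the trace word, embedded in F
  set Y : F → F := fun α => algebraMap B F (Tr (f.eval α / α)) with hYdef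
  set E : Finset F := Finset.univ.erase 0 with hE
  have hfnd : f.natDegree < k :=
    lt_of_le_of_lt (Polynomial.natDegree_le_iff_degree_le.mpr hf) (by omega)
  -- key power-sum identity
  have key : ∀ s, 2 ≤ s → s ≤ D → ∑ α ∈ E, Y α * α ^ (s * Q) = 0 := by
    intro s hs2 hsD
    have hexp : ∀ α ∈ E, Y α * α ^ (s * Q)
        = ∑ i ∈ Finset.range t, ∑ d ∈ Finset.range k,
            (f.coeff d) ^ (p ^ (m * i)) * α ^ (d * p ^ (m * i) + (s * Q - p ^ (m * i))) := by
      intro α hα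
      have hα0 : α ≠ 0 := (Finset.mem_erase.mp hα).1
      rw [hYdef]
      simp only
      rw [hTr, Finset.sum_mul]
      apply Finset.sum_congr rfl
      intro i hi
      have hiT : i < t := Finset.mem_range.mp hi
      have hNQ : p ^ (m * i) ≤ Q := by
        rw [hQ]
        exact Nat.pow_le_pow_right (by omega) (Nat.mul_le_mul_left m (by omega))
      have hsQ : 2 * Q ≤ s * Q := Nat.mul_le_mul_right Q hs2
      have hNsQ : p ^ (m * i) ≤ s * Q := le_trans hNQ (le_trans (by omega : Q ≤ 2 * Q) hsQ)
      have step1 : (f.eval α / α) ^ (p ^ (m * i)) * α ^ (s * Q)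
          = (f.eval α) ^ (p ^ (m * i)) * α ^ (s * Q - p ^ (m * i)) := by
        rw [div_pow, div_mul_eq_mul_div, div_eq_iff (pow_ne_zero _ hα0), mul_assoc, ← pow_add,
          Nat.sub_add_cancel hNsQ]
      rw [step1, Polynomial.eval_eq_sum_range' hfnd, sum_pow_char_pow, Finset.sum_mul]
      apply Finset.sum_congr rfl
      intro d hd
      rw [mul_pow, ← pow_mul, mul_assoc, ← pow_add]
    rw [Finset.sum_congr rfl hexp, Finset.sum_comm]
    apply Finset.sum_eq_zero
    intro i hi
    rw [Finset.sum_comm]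
    apply Finset.sum_eq_zero
    intro d hd
    rw [← Finset.mul_sum]
    have hiT : i < t := Finset.mem_range.mp hi
    have hdk : d < k := Finset.mem_range.mp hd
    have hNQ : p ^ (m * i) ≤ Q := by
      rw [hQ]
      exact Nat.pow_le_pow_right (by omega) (Nat.mul_le_mul_left m (by omega))
    have hsQ : 2 * Q ≤ s * Q := Nat.mul_le_mul_right Q hs2
    have hQlt : Q < 2 * Q := by omega
    have hNsQ' : p ^ (m * i) < s * Q := lt_of_lt_of_le (lt_of_le_of_lt hNQ hQlt) hsQ
    have hBpos : 0 < s * Q - p ^ (m * i) := Nat.sub_pos_of_lt hNsQ'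
    have hepos : 0 < d * p ^ (m * i) + (s * Q - p ^ (m * i)) := by omega
    have hzero : ∑ α ∈ E, α ^ (d * p ^ (m * i) + (s * Q - p ^ (m * i))) = 0 := by
      have h2 := Finset.sum_erase_add Finset.univ
        (fun α : F => α ^ (d * p ^ (m * i) + (s * Q - p ^ (m * i)))) (Finset.mem_univ (0 : F))
      simp only [zero_pow hepos.ne', add_zero] at h2
      rw [hE, h2]
      apply aux_sum_pow F _ hepos
      rw [hcardF]
      exact hndvd i hiT d hdk s hs2 hsD
    rw [hzero, mul_zero]
  -- reduce to the support finset
  set T : Finset F := Finset.univ.filter (fun α => α ≠ 0 ∧ Tr (f.eval α / α) ≠ 0) with hT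
  have hset : {α : F | α ≠ 0 ∧ Tr (f.eval α / α) ≠ 0} = ↑T := by
    ext α; simp [hT]
  rw [hset, Set.ncard_coe_finset]
  by_contra hcon
  push_neg at hcon
  obtain ⟨α₀, hα₀ne, hα₀tr⟩ := hnz
  have hα₀T : α₀ ∈ T := by simp [hT, hα₀ne, hα₀tr]
  have hTsub : T ⊆ E := by
    intro x hx
    rw [hT, Finset.mem_filter] at hx
    rw [hE, Finset.mem_erase]
    exact ⟨hx.2.1, Finset.mem_univ x⟩
  have keyT : ∀ s, 2 ≤ s → s ≤ D → ∑ β ∈ T, Y β * β ^ (s * Q) = 0 := by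
    intro s h1 h2
    rw [← key s h1 h2]
    apply Finset.sum_subset hTsub
    intro x hxE hxT
    have hx0 : x ≠ 0 := by
      rw [hE, Finset.mem_erase] at hxE; exact hxE.1
    have htr0 : Tr (f.eval x / x) = 0 := by
      by_contra h
      exact hxT (by rw [hT, Finset.mem_filter]; exact ⟨Finset.mem_univ x, hx0, h⟩)
    rw [hYdef]
    simp only [htr0, map_zero, zero_mul]
  have hinj : Function.Injective (fun x : F => x ^ Q) := by
    have hfun : (fun x : F => x ^ Q) = (iterateFrobenius F p (m * (t - 1))) := by
      funext x
      rw [iterateFrobenius_def, hQ]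
    rw [hfun]
    exact (iterateFrobenius F p (m * (t - 1))).injective
  set P : Polynomial F := ∏ β ∈ T.erase α₀, (Polynomial.X - Polynomial.C (β ^ Q)) with hP
  have hPdeg : P.natDegree = (T.erase α₀).card := by
    rw [hP, Polynomial.natDegree_prod _ _ (fun β _ => Polynomial.X_sub_C_ne_zero _)]
    rw [Finset.sum_congr rfl (fun β _ => Polynomial.natDegree_X_sub_C (β ^ Q)),
      Finset.sum_const, smul_eq_mul, mul_one]
  have hTpos : 0 < T.card := Finset.card_pos.mpr ⟨α₀, hα₀T⟩
  have hPlt : P.natDegree < T.card := by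
    rw [hPdeg, Finset.card_erase_of_mem hα₀T]; omega
  have hsum0 : ∑ β ∈ T, (Y β * β ^ (2 * Q)) * P.eval (β ^ Q) = 0 := by
    have hterm : ∀ β ∈ T, (Y β * β ^ (2 * Q)) * P.eval (β ^ Q)
        = ∑ j ∈ Finset.range T.card, P.coeff j * (Y β * β ^ ((j + 2) * Q)) := by
      intro β hβ
      rw [Polynomial.eval_eq_sum_range' hPlt, Finset.mul_sum]
      apply Finset.sum_congr rfl
      intro j hj
      rw [← pow_mul]
      have hpow : β ^ (2 * Q) * β ^ (Q * j) = β ^ ((j + 2) * Q) := by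
        rw [← pow_add]; congr 1; ring
      calc Y β * β ^ (2 * Q) * (P.coeff j * β ^ (Q * j))
          = P.coeff j * (Y β * (β ^ (2 * Q) * β ^ (Q * j))) := by ring
        _ = P.coeff j * (Y β * β ^ ((j + 2) * Q)) := by rw [hpow]
    rw [Finset.sum_congr rfl hterm, Finset.sum_comm]
    apply Finset.sum_eq_zero
    intro j hj
    rw [← Finset.mul_sum]
    have hj' : j < T.card := Finset.mem_range.mp hj
    have : ∑ β ∈ T, Y β * β ^ ((j + 2) * Q) = 0 :=
      keyT (j + 2) (by omega) (by omega)
    rw [this, mul_zero]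
  have hsum1 : ∑ β ∈ T, (Y β * β ^ (2 * Q)) * P.eval (β ^ Q)
      = (Y α₀ * α₀ ^ (2 * Q)) * P.eval (α₀ ^ Q) := by
    apply Finset.sum_eq_single_of_mem α₀ hα₀T
    intro β hβ hne
    have hev : P.eval (β ^ Q) = 0 := by
      rw [hP, Polynomial.eval_prod]
      apply Finset.prod_eq_zero (Finset.mem_erase.mpr ⟨hne, hβ⟩)
      simp
    rw [hev, mul_zero]
  have hPev : P.eval (α₀ ^ Q) ≠ 0 := by
    rw [hP, Polynomial.eval_prod]
    apply Finset.prod_ne_zero_iff.mpr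
    intro β hβ
    simp only [Polynomial.eval_sub, Polynomial.eval_X, Polynomial.eval_C]
    refine sub_ne_zero.mpr (fun h => (Finset.mem_erase.mp hβ).1 ?_)
    exact (hinj h).symm
  have hY0 : Y α₀ ≠ 0 := by
    rw [hYdef]
    simp only
    intro h
    exact hα₀tr ((algebraMap B F).injective (by rw [h, map_zero]))
  have hfin : (Y α₀ * α₀ ^ (2 * Q)) * P.eval (α₀ ^ Q) ≠ 0 :=
    mul_ne_zero (mul_ne_zero hY0 (pow_ne_zero _ hα₀ne)) hPev
  exact hfin (hsum1 ▸ hsum0)
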